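/- Let n ≥ 1 and let 1 ≤ i < j < k < l ≤ n be top positions. Suppose μ and μ' are Brauer diagrams of size n that agree on every edge not incident to any of T_i, T_j, T_k, T_l, and that μ contains the nested cups {T_i,T_l} and {T_j,T_k}, while μ' contains the crossing cups {T_i,T_k} and {T_j,T_l}. Then χ(μ) ≡ χ(μ') + 1 (mod 2), i.e. (−1)^{χ(μ)} = −(−1)^{χ(μ')}. -/

import Mathlib

open Finset

/-- Vertices of a Brauer diagram of size `n`: `Sum.inl i` is the top point `T i`
and `Sum.inr m` is the bottom point `B m` (positions indexed left to right by `Fin n`). -/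
abbrev BVertex (n : ℕ) := Fin n ⊕ Fin n

/-- A Brauer diagram of size `n` is a perfect matching of the `2n` vertices,
encoded as a fixed-point-free involution. -/
def BrauerDiagram (n : ℕ) :=
  {f : Equiv.Perm (BVertex n) // (∀ x, f (f x) = x) ∧ (∀ x, f x ≠ x)}

instance (n : ℕ) : Fintype (BrauerDiagram n) := Subtype.fintype _

/-- An edge of a Brauer diagram: a cup joins two top points, a cap joins two bottom
points, and an arc joins a top point and a bottom point. In `cup i j` and `cap i j`
we maintain `i < j`, and in `arc i m`, `i` is the top position and `m` the bottom one. -/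
inductive BEdge (n : ℕ)
  | cup : Fin n → Fin n → BEdge n
  | cap : Fin n → Fin n → BEdge n
  | arc : Fin n → Fin n → BEdge n
deriving DecidableEq

/-- The canonical edge with endpoints `x` and `y`. -/
def edgeOf {n : ℕ} : BVertex n → BVertex n → BEdge n
  | .inl i, .inl j => .cup (min i j) (max i j)
  | .inr i, .inr j => .cap (min i j) (max i j)
  | .inl i, .inr m => .arc i m
  | .inr m, .inl i => .arc i m

/-- Whether two edges of a Brauer diagram cross. -/
def crosses {n : ℕ} : BEdge n → BEdge n → Bool
  | .cup i j, .cup k l => decide ((i < k ∧ k < j ∧ j < l) ∨ (k < i ∧ i < l ∧ l < j))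
  | .cap i j, .cap k l => decide ((i < k ∧ k < j ∧ j < l) ∨ (k < i ∧ i < l ∧ l < j))
  | .cup _ _, .cap _ _ => false
  | .cap _ _, .cup _ _ => false
  | .cup i j, .arc k _ => decide (i < k ∧ k < j)
  | .arc k _, .cup i j => decide (i < k ∧ k < j)
  | .cap i j, .arc _ m => decide (i < m ∧ m < j)
  | .arc _ m, .cap i j => decide (i < m ∧ m < j)
  | .arc i m, .arc j m' => decide ((i < j ∧ m' < m) ∨ (j < i ∧ m < m'))

/-- The set of edges of a Brauer diagram. -/
def edges {n : ℕ} (μ : BrauerDiagram n) : Finset (BEdge n) :=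
  Finset.univ.image fun x => edgeOf x (μ.1 x)

/-- The crossing number of a Brauer diagram: the number of unordered pairs of
its edges that cross. -/
def crossingNumber {n : ℕ} (μ : BrauerDiagram n) : ℕ :=
  ((edges μ).offDiag.filter fun p => crosses p.1 p.2 = true).card / 2

section AuxLemmas

variable {n : ℕ}

lemma crosses_symm (e f : BEdge n) : crosses e f = crosses f e := by
  cases e <;> cases f <;> simp only [crosses] <;>
    first
      | rfl
      | (rw [decide_eq_decide]; tauto)

def dcross (x y : BEdge n) : ℕ := if x ≠ y ∧ crosses x y then 1 else 0

lemma dcross_symm (x y : BEdge n) : dcross x y = dcross y x := by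
  unfold dcross
  rw [crosses_symm]
  exact if_congr (and_congr_left' ne_comm) rfl rfl

lemma dcross_self (x : BEdge n) : dcross x x = 0 := by simp [dcross]

def Tsum (s : Finset (BEdge n)) : ℕ := ∑ x ∈ s, ∑ y ∈ s, dcross x y

lemma Tsum_insert {a : BEdge n} {s : Finset (BEdge n)} (ha : a ∉ s) :
    Tsum (insert a s) = Tsum s + 2 * ∑ y ∈ s, dcross a y := by
  unfold Tsum
  rw [Finset.sum_insert ha, Finset.sum_insert ha, dcross_self]
  have h1 : ∀ x ∈ s, ∑ y ∈ insert a s, dcross x y = dcross x a + ∑ y ∈ s, dcross x y :=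
    fun x _ => Finset.sum_insert ha
  rw [Finset.sum_congr rfl h1, Finset.sum_add_distrib]
  have h2 : ∑ x ∈ s, dcross x a = ∑ x ∈ s, dcross a x :=
    Finset.sum_congr rfl fun x _ => dcross_symm x a
  rw [h2]
  ring

lemma Tsum_even (s : Finset (BEdge n)) : Even (Tsum s) := by
  classical
  induction s using Finset.induction_on with
  | empty => simp [Tsum]
  | insert _ _ ha ih =>
      rw [Tsum_insert ha]
      exact ih.add (even_two_mul _)

lemma crossingNumber_eq (μ : BrauerDiagram n) :
    crossingNumber μ = Tsum (edges μ) / 2 := by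
  unfold crossingNumber Tsum
  congr 1
  rw [Finset.card_filter, (by ext x; simp [and_assoc] : (edges μ).offDiag = ((edges μ) ×ˢ (edges μ)).filter (fun a => a.1 ≠ a.2)), Finset.sum_filter, Finset.sum_product]
  refine Finset.sum_congr rfl fun x _ => Finset.sum_congr rfl fun y _ => ?_
  by_cases h1 : x ≠ y <;> by_cases h2 : crosses x y <;> simp [dcross, h1, h2]

end AuxLemmas

section Mid

variable {n : ℕ}

/-- The endpoints of `e` among top positions avoid `i, j, k, l`. -/
def avoids (i j k l : Fin n) : BEdge n → Prop
  | .cup a b => a ≠ i ∧ a ≠ j ∧ a ≠ k ∧ a ≠ l ∧ b ≠ i ∧ b ≠ j ∧ b ≠ k ∧ b ≠ l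
  | .cap _ _ => True
  | .arc a _ => a ≠ i ∧ a ≠ j ∧ a ≠ k ∧ a ≠ l

lemma dcross_of_ne {x y : BEdge n} (h : x ≠ y) :
    dcross x y = if crosses x y then 1 else 0 := by
  simp [dcross, h]

lemma per_edge {i j k l : Fin n} (hij : i < j) (hjk : j < k) (hkl : k < l)
    {e : BEdge n} (he : avoids i j k l e) :
    (dcross (.cup i l) e + dcross (.cup j k) e) % 2
      = (dcross (.cup i k) e + dcross (.cup j l) e) % 2 := by
  have hij' : (i : ℕ) < j := hij
  have hjk' : (j : ℕ) < k := hjk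
  have hkl' : (k : ℕ) < l := hkl
  cases e with
  | cap a b => simp [dcross, crosses]
  | arc a b =>
      obtain ⟨h1, h2, h3, h4⟩ := he
      have v1 : (a : ℕ) ≠ i := fun h => h1 (Fin.ext h)
      have v2 : (a : ℕ) ≠ j := fun h => h2 (Fin.ext h)
      have v3 : (a : ℕ) ≠ k := fun h => h3 (Fin.ext h)
      have v4 : (a : ℕ) ≠ l := fun h => h4 (Fin.ext h)
      simp only [dcross, crosses, ne_eq, reduceCtorEq, not_false_eq_true, true_and,
        decide_eq_true_eq, Fin.lt_def]
      split_ifs <;> omega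
  | cup a b =>
      obtain ⟨h1, h2, h3, h4, h5, h6, h7, h8⟩ := he
      have v1 : (a : ℕ) ≠ i := fun h => h1 (Fin.ext h)
      have v2 : (a : ℕ) ≠ j := fun h => h2 (Fin.ext h)
      have v3 : (a : ℕ) ≠ k := fun h => h3 (Fin.ext h)
      have v4 : (a : ℕ) ≠ l := fun h => h4 (Fin.ext h)
      have w1 : (b : ℕ) ≠ i := fun h => h5 (Fin.ext h)
      have w2 : (b : ℕ) ≠ j := fun h => h6 (Fin.ext h)
      have w3 : (b : ℕ) ≠ k := fun h => h7 (Fin.ext h)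
      have w4 : (b : ℕ) ≠ l := fun h => h8 (Fin.ext h)
      have n1 : BEdge.cup i l ≠ BEdge.cup a b := by
        simp only [ne_eq, BEdge.cup.injEq, not_and]
        intro h; exact absurd h.symm h1
      have n2 : BEdge.cup j k ≠ BEdge.cup a b := by
        simp only [ne_eq, BEdge.cup.injEq, not_and]
        intro h; exact absurd h.symm h2
      have n3 : BEdge.cup i k ≠ BEdge.cup a b := by
        simp only [ne_eq, BEdge.cup.injEq, not_and]
        intro h; exact absurd h.symm h1
      have n4 : BEdge.cup j l ≠ BEdge.cup a b := by
        simp only [ne_eq, BEdge.cup.injEq, not_and]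
        intro h; exact absurd h.symm h2
      rw [dcross_of_ne n1, dcross_of_ne n2, dcross_of_ne n3, dcross_of_ne n4]
      simp only [crosses, decide_eq_true_eq, Fin.lt_def]
      split_ifs <;> omega

lemma dcross_nested {i j k l : Fin n} (hij : i < j) (hjk : j < k) (hkl : k < l) :
    dcross (.cup i l) (.cup j k) = 0 := by
  have hij' : (i : ℕ) < j := hij
  have hjk' : (j : ℕ) < k := hjk
  have hkl' : (k : ℕ) < l := hkl
  rw [dcross]
  rw [if_neg]
  rintro ⟨-, hc⟩
  simp only [crosses, decide_eq_true_eq, Fin.lt_def] at hc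
  omega

lemma dcross_crossing {i j k l : Fin n} (hij : i < j) (hjk : j < k) (hkl : k < l) :
    dcross (.cup i k) (.cup j l) = 1 := by
  have hij' : (i : ℕ) < j := hij
  have hjk' : (j : ℕ) < k := hjk
  have hkl' : (k : ℕ) < l := hkl
  rw [dcross, if_pos]
  constructor
  · simp only [ne_eq, BEdge.cup.injEq, not_and]
    intro h; exact absurd h (Fin.ne_of_lt hij)
  · simp only [crosses, decide_eq_true_eq, Fin.lt_def]
    omega

end Mid


/-- Lemma (d): replacing the nested cups `{T_i,T_l}` and `{T_j,T_k}` by the crossing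
cups `{T_i,T_k}` and `{T_j,T_l}` (where `i < j < k < l` are top positions), all other
edges remaining the same, changes the parity of the crossing number. -/
theorem nested_to_crossing_cups_parity (n : ℕ) (hn : 1 ≤ n) (i j k l : Fin n)
    (hij : i < j) (hjk : j < k) (hkl : k < l) (μ μ' : BrauerDiagram n)
    (hcup1 : μ.1 (Sum.inl i) = Sum.inl l)
    (hcup2 : μ.1 (Sum.inl j) = Sum.inl k)
    (hcup1' : μ'.1 (Sum.inl i) = Sum.inl k)
    (hcup2' : μ'.1 (Sum.inl j) = Sum.inl l)
    (hagree : ∀ x : BVertex n, x ≠ Sum.inl i → x ≠ Sum.inl j →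
      x ≠ Sum.inl k → x ≠ Sum.inl l → μ.1 x = μ'.1 x) :
    (-1 : ℤ) ^ crossingNumber μ = -(-1 : ℤ) ^ crossingNumber μ' := by
  classical
  have hik : i < k := hij.trans hjk
  have hjl : j < l := hjk.trans hkl
  have hil : i < l := hij.trans hjl
  -- involution facts
  have hinv : ∀ x, μ.1 (μ.1 x) = x := μ.2.1
  have hinv' : ∀ x, μ'.1 (μ'.1 x) = x := μ'.2.1
  have hk2 : μ.1 (Sum.inl k) = Sum.inl j := by
    have := hinv (Sum.inl j); rwa [hcup2] at this
  have hl2 : μ.1 (Sum.inl l) = Sum.inl i := by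
    have := hinv (Sum.inl i); rwa [hcup1] at this
  have hk2' : μ'.1 (Sum.inl k) = Sum.inl i := by
    have := hinv' (Sum.inl i); rwa [hcup1'] at this
  have hl2' : μ'.1 (Sum.inl l) = Sum.inl j := by
    have := hinv' (Sum.inl j); rwa [hcup2'] at this
  set S : Finset (BVertex n) :=
    Finset.univ \ {Sum.inl i, Sum.inl j, Sum.inl k, Sum.inl l} with hSdef
  have hmemS : ∀ x : BVertex n, x ∈ S ↔
      x ≠ Sum.inl i ∧ x ≠ Sum.inl j ∧ x ≠ Sum.inl k ∧ x ≠ Sum.inl l := by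
    intro x
    simp [hSdef, Finset.mem_sdiff, not_or]
  set E : Finset (BEdge n) := S.image (fun x => edgeOf x (μ.1 x)) with hEdef
  have hE' : E = S.image (fun x => edgeOf x (μ'.1 x)) := by
    apply Finset.image_congr
    intro x hx
    obtain ⟨h1, h2, h3, h4⟩ := (hmemS x).mp (Finset.mem_coe.mp hx)
    simp only
    rw [hagree x h1 h2 h3 h4]
  -- the four special edge computations
  have fA : edgeOf (Sum.inl i) (Sum.inl l) = BEdge.cup i l := by
    simp [edgeOf, min_eq_left hil.le, max_eq_right hil.le]
  have fB : edgeOf (Sum.inl j) (Sum.inl k) = BEdge.cup j k := by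
    simp [edgeOf, min_eq_left hjk.le, max_eq_right hjk.le]
  have fB2 : edgeOf (Sum.inl k) (Sum.inl j) = BEdge.cup j k := by
    simp [edgeOf, min_eq_right hjk.le, max_eq_left hjk.le]
  have fA2 : edgeOf (Sum.inl l) (Sum.inl i) = BEdge.cup i l := by
    simp [edgeOf, min_eq_right hil.le, max_eq_left hil.le]
  have fA' : edgeOf (Sum.inl i) (Sum.inl k) = BEdge.cup i k := by
    simp [edgeOf, min_eq_left hik.le, max_eq_right hik.le]
  have fB' : edgeOf (Sum.inl j) (Sum.inl l) = BEdge.cup j l := by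
    simp [edgeOf, min_eq_left hjl.le, max_eq_right hjl.le]
  have fA2' : edgeOf (Sum.inl k) (Sum.inl i) = BEdge.cup i k := by
    simp [edgeOf, min_eq_right hik.le, max_eq_left hik.le]
  have fB2' : edgeOf (Sum.inl l) (Sum.inl j) = BEdge.cup j l := by
    simp [edgeOf, min_eq_right hjl.le, max_eq_left hjl.le]
  -- decomposition of edge sets
  have hedges : edges μ = insert (BEdge.cup i l) (insert (BEdge.cup j k) E) := by
    ext e
    simp only [edges, Finset.mem_image, Finset.mem_univ, true_and, Finset.mem_insert]
    constructor
    · rintro ⟨x, rfl⟩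
      by_cases h1 : x = Sum.inl i
      · subst h1; rw [hcup1, fA]; left; rfl
      by_cases h2 : x = Sum.inl j
      · subst h2; rw [hcup2, fB]; right; left; rfl
      by_cases h3 : x = Sum.inl k
      · subst h3; rw [hk2, fB2]; right; left; rfl
      by_cases h4 : x = Sum.inl l
      · subst h4; rw [hl2, fA2]; left; rfl
      · right; right
        exact Finset.mem_image.mpr ⟨x, (hmemS x).mpr ⟨h1, h2, h3, h4⟩, rfl⟩
    · rintro (rfl | rfl | he)
      · exact ⟨Sum.inl i, by rw [hcup1, fA]⟩
      · exact ⟨Sum.inl j, by rw [hcup2, fB]⟩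
      · obtain ⟨x, _, rfl⟩ := Finset.mem_image.mp he
        exact ⟨x, rfl⟩
  have hedges' : edges μ' = insert (BEdge.cup i k) (insert (BEdge.cup j l) E) := by
    rw [hE']
    ext e
    simp only [edges, Finset.mem_image, Finset.mem_univ, true_and, Finset.mem_insert]
    constructor
    · rintro ⟨x, rfl⟩
      by_cases h1 : x = Sum.inl i
      · subst h1; rw [hcup1', fA']; left; rfl
      by_cases h2 : x = Sum.inl j
      · subst h2; rw [hcup2', fB']; right; left; rfl
      by_cases h3 : x = Sum.inl k
      · subst h3; rw [hk2', fA2']; left; rfl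
      by_cases h4 : x = Sum.inl l
      · subst h4; rw [hl2', fB2']; right; left; rfl
      · right; right
        exact ⟨x, (hmemS x).mpr ⟨h1, h2, h3, h4⟩, rfl⟩
    · rintro (rfl | rfl | he)
      · exact ⟨Sum.inl i, by rw [hcup1', fA']⟩
      · exact ⟨Sum.inl j, by rw [hcup2', fB']⟩
      · obtain ⟨x, _, rfl⟩ := he
        exact ⟨x, rfl⟩
  -- every edge of E avoids i j k l
  have havoid : ∀ e ∈ E, avoids i j k l e := by
    intro e he
    obtain ⟨x, hx, rfl⟩ := Finset.mem_image.mp he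
    obtain ⟨h1, h2, h3, h4⟩ := (hmemS x).mp hx
    have g1 : μ.1 x ≠ Sum.inl i := by
      intro h
      apply h4
      have := congrArg μ.1 h
      rwa [hinv, hcup1] at this
    have g2 : μ.1 x ≠ Sum.inl j := by
      intro h
      apply h3
      have := congrArg μ.1 h
      rwa [hinv, hcup2] at this
    have g3 : μ.1 x ≠ Sum.inl k := by
      intro h
      apply h2
      have := congrArg μ.1 h
      rwa [hinv, hk2] at this
    have g4 : μ.1 x ≠ Sum.inl l := by
      intro h
      apply h1
      have := congrArg μ.1 h
      rwa [hinv, hl2] at this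
    show avoids i j k l (edgeOf x (μ.1 x))
    rcases x with a | m
    · have ha1 : a ≠ i := fun h => h1 (by rw [h])
      have ha2 : a ≠ j := fun h => h2 (by rw [h])
      have ha3 : a ≠ k := fun h => h3 (by rw [h])
      have ha4 : a ≠ l := fun h => h4 (by rw [h])
      rcases hy : μ.1 (Sum.inl a) with b | m'
      · rw [hy] at g1 g2 g3 g4
        have hb1 : b ≠ i := fun h => g1 (by rw [h])
        have hb2 : b ≠ j := fun h => g2 (by rw [h])
        have hb3 : b ≠ k := fun h => g3 (by rw [h])
        have hb4 : b ≠ l := fun h => g4 (by rw [h])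
        show avoids i j k l (BEdge.cup (min a b) (max a b))
        unfold avoids
        rcases min_cases a b with ⟨hm, _⟩ | ⟨hm, _⟩ <;>
          rcases max_cases a b with ⟨hM, _⟩ | ⟨hM, _⟩ <;>
            rw [hm, hM] <;> exact ⟨by assumption, by assumption, by assumption,
              by assumption, by assumption, by assumption, by assumption, by assumption⟩
      · show avoids i j k l (BEdge.arc a m')
        exact ⟨ha1, ha2, ha3, ha4⟩
    · rcases hy : μ.1 (Sum.inr m) with b | m'
      · rw [hy] at g1 g2 g3 g4
        show avoids i j k l (BEdge.arc b m)
        exact ⟨fun h => g1 (by rw [h]), fun h => g2 (by rw [h]),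
          fun h => g3 (by rw [h]), fun h => g4 (by rw [h])⟩
      · show avoids i j k l (BEdge.cap (min m m') (max m m'))
        trivial
  have hAE : BEdge.cup i l ∉ E := fun h => (havoid _ h).1 rfl
  have hBE : BEdge.cup j k ∉ E := fun h => (havoid _ h).2.1 rfl
  have hA'E : BEdge.cup i k ∉ E := fun h => (havoid _ h).1 rfl
  have hB'E : BEdge.cup j l ∉ E := fun h => (havoid _ h).2.1 rfl
  have hAB : BEdge.cup i l ≠ BEdge.cup j k := by
    simp only [ne_eq, BEdge.cup.injEq, not_and]
    intro h; exact absurd h (Fin.ne_of_lt hij)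
  have hA'B' : BEdge.cup i k ≠ BEdge.cup j l := by
    simp only [ne_eq, BEdge.cup.injEq, not_and]
    intro h; exact absurd h (Fin.ne_of_lt hij)
  -- Tsum decompositions
  have hT : Tsum (edges μ) = Tsum E + 2 * ∑ y ∈ E, (dcross (BEdge.cup i l) y + dcross (BEdge.cup j k) y) := by
    rw [hedges, Tsum_insert (fun h => ((Finset.mem_insert).mp h).elim hAB hAE),
      Tsum_insert hBE, Finset.sum_insert hBE, dcross_nested hij hjk hkl,
      Finset.sum_add_distrib]
    ring
  have hT' : Tsum (edges μ') = Tsum E + 2 * (1 + ∑ y ∈ E, (dcross (BEdge.cup i k) y + dcross (BEdge.cup j l) y)) := by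
    rw [hedges', Tsum_insert (fun h => ((Finset.mem_insert).mp h).elim hA'B' hA'E),
      Tsum_insert hB'E, Finset.sum_insert hB'E, dcross_crossing hij hjk hkl,
      Finset.sum_add_distrib]
    ring
  obtain ⟨t, ht⟩ := Tsum_even E
  set D := ∑ y ∈ E, (dcross (BEdge.cup i l) y + dcross (BEdge.cup j k) y) with hD
  set D' := ∑ y ∈ E, (dcross (BEdge.cup i k) y + dcross (BEdge.cup j l) y) with hD'
  have hχ : crossingNumber μ = t + D := by
    rw [crossingNumber_eq, hT, ht]; omega
  have hχ' : crossingNumber μ' = t + 1 + D' := by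
    rw [crossingNumber_eq, hT', ht]; omega
  have hDD' : D % 2 = D' % 2 := by
    rw [hD, hD', Finset.sum_nat_mod]
    conv_rhs => rw [Finset.sum_nat_mod]
    congr 1
    exact Finset.sum_congr rfl fun e he => per_edge hij hjk hkl (havoid e he)
  rw [hχ, hχ']
  rcases Nat.even_or_odd (t + D) with h | h <;>
    rcases Nat.even_or_odd (t + 1 + D') with h2 | h2
  · exfalso
    rw [Nat.even_iff] at h h2; omega
  · simp [h.neg_one_pow, h2.neg_one_pow]
  · simp [h.neg_one_pow, h2.neg_one_pow]
  · exfalso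
    rw [Nat.odd_iff] at h h2; omega
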